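/- For all real numbers t and c with c > 0 and t ≤ c, one has e^t − 1 − t ≤ t² · (e^c − 1 − c) / c². -/

import Mathlib

open Real

lemma exp_tail (x : ℝ) :
    exp x - 1 - x = ∑' n : ℕ, x ^ (n + 2) / (n + 2).factorial := by
  have hs := Real.summable_pow_div_factorial x
  have h0 : exp x = ∑' n : ℕ, x ^ n / n.factorial := by
    rw [Real.exp_eq_exp_ℝ, NormedSpace.exp_eq_tsum_div]
  rw [h0, Summable.tsum_eq_zero_add hs, Summable.tsum_eq_zero_add ((summable_nat_add_iff 1).2 hs)]
  simp [Nat.factorial]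

lemma tail_summable (x : ℝ) :
    Summable (fun n : ℕ => x ^ (n + 2) / (n + 2).factorial) := by
  exact_mod_cast (summable_nat_add_iff 2).2 (Real.summable_pow_div_factorial x)

lemma bennett_case_pos (t c : ℝ) (ht : 0 ≤ t) (hc : 0 < c) (htc : t ≤ c) :
    exp t - 1 - t ≤ t ^ 2 * (exp c - 1 - c) / c ^ 2 := by
  rw [exp_tail, exp_tail]
  rw [show t ^ 2 * (∑' n : ℕ, c ^ (n + 2) / (n + 2).factorial) / c ^ 2
      = ∑' n : ℕ, t ^ 2 * (c ^ (n + 2) / (n + 2).factorial) / c ^ 2 by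
    rw [tsum_div_const, ← tsum_mul_left]]
  refine Summable.tsum_le_tsum (fun n => ?_) (tail_summable t)
    (((tail_summable c).mul_left _).div_const _)
  have h1 : t ^ (n + 2) ≤ t ^ 2 * c ^ n := by
    calc t ^ (n + 2) = t ^ 2 * t ^ n := by ring
    _ ≤ t ^ 2 * c ^ n := by gcongr
  have h2 : t ^ 2 * (c ^ (n + 2) / (n + 2).factorial) / c ^ 2
      = t ^ 2 * c ^ n / (n + 2).factorial := by
    field_simp; ring
  rw [h2]
  have : (0:ℝ) < (n + 2).factorial := by positivity
  gcongr

lemma exp_le_quadratic_of_nonpos {t : ℝ} (ht : t ≤ 0) :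
    exp t ≤ 1 + t + t ^ 2 / 2 := by
  have hd : ∀ x : ℝ, HasDerivAt (fun x => 1 + x + x ^ 2 / 2 - exp x) (1 + x - exp x) x := by
    intro x
    have := ((hasDerivAt_id x).const_add 1).add
      (((hasDerivAt_pow 2 x).div_const 2)) |>.sub (Real.hasDerivAt_exp x)
    exact this.congr_deriv (by norm_num)
  have hanti : AntitoneOn (fun x => 1 + x + x ^ 2 / 2 - exp x) (Set.Iic 0) := by
    apply antitoneOn_of_deriv_nonpos (convex_Iic 0)
    · exact Continuous.continuousOn (by continuity)
    · intro x _
      exact ((hd x).differentiableAt).differentiableWithinAt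
    · intro x _
      rw [(hd x).deriv]
      linarith [Real.add_one_le_exp x]
  have := hanti (Set.mem_Iic.2 ht) (Set.mem_Iic.2 le_rfl) ht
  simp at this
  linarith

/-- Bennett-type elementary bound. For all real `t` and `c` with `c > 0` and
`t ≤ c`, one has `e^t - 1 - t ≤ t² (e^c - 1 - c) / c²`. -/
theorem bennett_type_bound (t c : ℝ) (hc : 0 < c) (htc : t ≤ c) :
    exp t - 1 - t ≤ t ^ 2 * (exp c - 1 - c) / c ^ 2 := by
  rcases le_or_gt 0 t with ht | ht
  · exact bennett_case_pos t c ht hc htc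
  · have h1 : exp t - 1 - t ≤ t ^ 2 / 2 := by
      linarith [exp_le_quadratic_of_nonpos ht.le]
    have h2 : c ^ 2 / 2 ≤ exp c - 1 - c := by
      linarith [Real.quadratic_le_exp_of_nonneg hc.le]
    have h3 : t ^ 2 / 2 ≤ t ^ 2 * (exp c - 1 - c) / c ^ 2 := by
      rw [div_le_div_iff₀ (by norm_num) (by positivity)]
      nlinarith [sq_nonneg t, sq_nonneg c]
    linarith
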